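/- For every real ε > 0 and integer k ≥ √2/ε, every point x = (x_1,…,x_n) in the path L = ⋃_{i=1}^{n−1} conv{e_i, e_{i+1}} whose Euclidean distance from e_n is at least ε satisfies x_n ≤ (k−1)/k. -/

import Mathlib

/-- For `ε > 0` and an integer `k ≥ √2/ε`, every point `x` of the path
`L = ⋃_{i=1}^{n−1} conv{e_i, e_{i+1}}` at Euclidean distance at least `ε` from
`e_n` satisfies `x_n ≤ (k−1)/k`. -/
theorem stmt16 (n : ℕ) (hn : 2 ≤ n) (ε : ℝ) (hε : 0 < ε)
    (k : ℕ) (hk : Real.sqrt 2 / ε ≤ (k : ℝ))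
    (x : EuclideanSpace ℝ (Fin n))
    (hx : x ∈ ⋃ i : Fin n, ⋃ hi : (i : ℕ) + 1 < n,
      segment ℝ (EuclideanSpace.single i 1)
        (EuclideanSpace.single (⟨(i : ℕ) + 1, hi⟩ : Fin n) 1))
    (hd : ε ≤ dist x (EuclideanSpace.single (⟨n - 1, by omega⟩ : Fin n) 1)) :
    x ⟨n - 1, by omega⟩ ≤ ((k : ℝ) - 1) / k := by
  set m : Fin n := ⟨n - 1, by omega⟩ with hm
  have hs2 : (0:ℝ) < Real.sqrt 2 := by positivity
  have hkpos : (0:ℝ) < k := lt_of_lt_of_le (div_pos hs2 hε) hk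
  have hk1 : (1:ℝ) ≤ k := by exact_mod_cast (by exact_mod_cast hkpos : 0 < k)
  simp only [Set.mem_iUnion] at hx
  obtain ⟨i, hi, a, b, ha, hb, hab, hxe⟩ := hx
  have hile : (i : ℕ) + 1 ≤ n - 1 := by omega
  rcases lt_or_eq_of_le hile with hlt | heq
  · -- x m = 0
    have h1 : m ≠ i := by
      intro h; have := congrArg Fin.val h; simp only [hm, Fin.val_mk] at this; omega
    have h2 : m ≠ (⟨(i : ℕ) + 1, hi⟩ : Fin n) := by
      intro h; have := congrArg Fin.val h; simp only [hm, Fin.val_mk] at this; omega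
    have hxm : x m = 0 := by
      rw [← hxe]
      simp [EuclideanSpace.single_apply, h1, h2]
    rw [hxm]
    exact div_nonneg (by linarith) (by linarith)
  · have hmi : (⟨(i : ℕ) + 1, hi⟩ : Fin n) = m := by
      simp only [Fin.ext_iff, hm, Fin.val_mk]; omega
    rw [hmi] at hxe
    have hne : m ≠ i := by
      intro h; have := congrArg Fin.val h; simp only [hm, Fin.val_mk] at this; omega
    have hxm : x m = b := by
      rw [← hxe]
      simp [EuclideanSpace.single_apply, hne]
    have hb' : b = 1 - a := by linarith
    have hxsub : x - EuclideanSpace.single m 1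
        = a • (EuclideanSpace.single i 1 - EuclideanSpace.single m 1) := by
      rw [← hxe, hb']
      module
    have hnorm2 : ‖EuclideanSpace.single i (1:ℝ) - EuclideanSpace.single m 1‖ ^ 2 = 2 := by
      rw [← real_inner_self_eq_norm_sq]
      simp only [inner_sub_left, inner_sub_right, EuclideanSpace.inner_single_left,
        EuclideanSpace.single_apply, hne, Ne.symm hne]
      simp
      ring
    have hnorm : ‖EuclideanSpace.single i (1:ℝ) - EuclideanSpace.single m 1‖ = Real.sqrt 2 := by
      rw [show (2:ℝ) = ‖EuclideanSpace.single i (1:ℝ) - EuclideanSpace.single m 1‖ ^ 2 from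
        hnorm2.symm, Real.sqrt_sq (norm_nonneg _)]
    have hdist : dist x (EuclideanSpace.single m 1) = a * Real.sqrt 2 := by
      rw [dist_eq_norm, hxsub, norm_smul, hnorm, Real.norm_eq_abs, abs_of_nonneg ha]
    rw [hdist] at hd
    have hkε : Real.sqrt 2 ≤ (k:ℝ) * ε := (div_le_iff₀ hε).mp hk
    have h1 : Real.sqrt 2 ≤ (k:ℝ) * (a * Real.sqrt 2) :=
      le_trans hkε (mul_le_mul_of_nonneg_left hd (le_of_lt hkpos))
    have hka : 1 ≤ (k:ℝ) * a := by
      nlinarith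
    rw [hxm, hb', le_div_iff₀ hkpos]
    nlinarith
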